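/- Suppose f is a multiplicative function with f(p) ≠ 1 for all primes p dividing n. Then ∑_{d|n} μ(d) ω(d) f(d) = (∏_{p|n} (1 - f(p))) · ∑_{p|n} f(p)/(f(p) - 1), where the products and sums run over the distinct prime divisors of n. -/

import Mathlib

open Finset ArithmeticFunction

private lemma aux_prod_one_add {ι : Type*} [DecidableEq ι] (s : Finset ι) (x : ι → ℂ) :
    ∑ t ∈ s.powerset, ∏ i ∈ t, x i = ∏ i ∈ s, (1 + x i) := by
  simp_rw [add_comm (1 : ℂ)]
  rw [Finset.prod_add]
  simp

private lemma aux_key {ι : Type*} [DecidableEq ι] (s : Finset ι) (x : ι → ℂ) :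
    ∑ t ∈ s.powerset, (t.card : ℂ) * ∏ i ∈ t, x i
      = ∑ p ∈ s, x p * ∏ q ∈ s.erase p, (1 + x q) := by
  induction s using Finset.induction_on with
  | empty => simp
  | insert _ _ ha ih =>
    rename_i a s
    rw [Finset.sum_powerset_insert ha, Finset.sum_insert ha, Finset.erase_insert ha]
    have h1 : ∑ t ∈ s.powerset, (↑(insert a t).card : ℂ) * ∏ i ∈ insert a t, x i
        = x a * ∑ t ∈ s.powerset, (↑t.card : ℂ) * ∏ i ∈ t, x i
          + x a * ∏ i ∈ s, (1 + x i) := by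
      rw [← aux_prod_one_add, Finset.mul_sum, Finset.mul_sum, ← Finset.sum_add_distrib]
      refine Finset.sum_congr rfl fun t ht => ?_
      have hat : a ∉ t := fun h => ha (Finset.mem_powerset.mp ht h)
      rw [Finset.card_insert_of_notMem hat, Finset.prod_insert hat]
      push_cast
      ring
    rw [h1, ih]
    have h2 : ∑ p ∈ s, x p * ∏ q ∈ (insert a s).erase p, (1 + x q)
        = ∑ p ∈ s, (1 + x a) * (x p * ∏ q ∈ s.erase p, (1 + x q)) := by
      refine Finset.sum_congr rfl fun p hp => ?_
      have hpa : a ≠ p := fun h => ha (h ▸ hp)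
      rw [Finset.erase_insert_of_ne hpa]
      rw [Finset.prod_insert (fun h => ha (Finset.mem_of_mem_erase h))]
      ring
    rw [h2]
    simp_rw [add_mul, one_mul]
    rw [Finset.sum_add_distrib, ← Finset.mul_sum]
    ring

private lemma aux_f_prod (f : ℕ → ℂ) (hf1 : f 1 = 1)
    (hfm : ∀ a b : ℕ, Nat.Coprime a b → f (a * b) = f a * f b) :
    ∀ (S : Finset ℕ), (∀ p ∈ S, p.Prime) → f (∏ p ∈ S, p) = ∏ p ∈ S, f p := by
  intro S
  induction S using Finset.induction_on with
  | empty => simpa using hf1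
  | insert _ _ ha ih =>
    rename_i a s
    intro hS
    have hap : a.Prime := hS a (Finset.mem_insert_self a s)
    have hcop : Nat.Coprime a (∏ p ∈ s, p) := by
      apply Nat.Coprime.prod_right
      intro p hp
      exact (Nat.coprime_primes hap (hS p (Finset.mem_insert_of_mem hp))).mpr
        (fun h => ha (h ▸ hp))
    rw [Finset.prod_insert ha, Finset.prod_insert ha, hfm _ _ hcop,
      ih (fun p hp => hS p (Finset.mem_insert_of_mem hp))]

private lemma aux_squarefree_prod :
    ∀ (S : Finset ℕ), (∀ p ∈ S, p.Prime) → Squarefree (∏ p ∈ S, p) := by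
  intro S
  induction S using Finset.induction_on with
  | empty => simp
  | insert _ _ ha ih =>
    rename_i a s
    intro hS
    have hap : a.Prime := hS a (Finset.mem_insert_self a s)
    have hcop : Nat.Coprime a (∏ p ∈ s, p) := by
      apply Nat.Coprime.prod_right
      intro p hp
      exact (Nat.coprime_primes hap (hS p (Finset.mem_insert_of_mem hp))).mpr
        (fun h => ha (h ▸ hp))
    rw [Finset.prod_insert ha, Nat.squarefree_mul hcop]
    exact ⟨hap.squarefree, ih (fun p hp => hS p (Finset.mem_insert_of_mem hp))⟩

theorem sum_moebius_omega_mul (f : ℕ → ℂ) (n : ℕ) (hn : 1 ≤ n)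
    (hf1 : f 1 = 1) (hfm : ∀ a b : ℕ, Nat.Coprime a b → f (a * b) = f a * f b)
    (hfp : ∀ p : ℕ, p.Prime → p ∣ n → f p ≠ 1) :
    (∑ d ∈ n.divisors,
        (ArithmeticFunction.moebius d : ℂ) * (ArithmeticFunction.cardDistinctFactors d : ℂ) * f d) =
      (∏ p ∈ n.primeFactors, (1 - f p)) * ∑ p ∈ n.primeFactors, f p / (f p - 1) := by
  classical
  have h0 : n ≠ 0 := by omega
  -- restrict to squarefree divisors
  have hstep1 : (∑ d ∈ n.divisors,
        (moebius d : ℂ) * (cardDistinctFactors d : ℂ) * f d)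
      = ∑ d ∈ n.divisors with Squarefree d,
        (moebius d : ℂ) * (cardDistinctFactors d : ℂ) * f d := by
    rw [Finset.sum_filter_of_ne]
    intro d _ hne
    by_contra hsq
    rw [moebius_eq_zero_of_not_squarefree hsq] at hne
    simp at hne
  rw [hstep1, Nat.sum_divisors_filter_squarefree h0]
  have hfac : (UniqueFactorizationMonoid.normalizedFactors n).toFinset = n.primeFactors := by
    rw [Nat.factors_eq]
    rfl
  rw [hfac]
  -- rewrite each term
  have hstep2 : ∀ S ∈ n.primeFactors.powerset,
      (moebius (S.val.prod) : ℂ) * (cardDistinctFactors (S.val.prod) : ℂ) * f (S.val.prod)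
        = (S.card : ℂ) * ∏ p ∈ S, (-(f p)) := by
    intro S hS
    have hSsub : S ⊆ n.primeFactors := Finset.mem_powerset.mp hS
    have hSp : ∀ p ∈ S, p.Prime := fun p hp =>
      Nat.prime_of_mem_primeFactors (hSsub hp)
    have hprodval : S.val.prod = ∏ p ∈ S, p := Finset.prod_val S
    have hsq := aux_squarefree_prod S hSp
    have hpf : (∏ p ∈ S, p).primeFactors = S := Nat.primeFactors_prod hSp
    have hne0 : (∏ p ∈ S, p) ≠ 0 := hsq.ne_zero
    have hcardo : (ArithmeticFunction.cardDistinctFactors (∏ p ∈ S, p) : ℕ)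
        = S.card := by
      rw [cardDistinctFactors_apply, ← List.card_toFinset, Nat.toFinset_factors, hpf]
    have hΩ : (ArithmeticFunction.cardFactors (∏ p ∈ S, p) : ℕ) = S.card := by
      rw [← (ArithmeticFunction.cardDistinctFactors_eq_cardFactors_iff_squarefree
        hne0).mpr hsq, hcardo]
    have hprodneg : ∏ p ∈ S, (-f p) = (-1 : ℂ) ^ S.card * ∏ p ∈ S, f p := by
      have h' : ∏ p ∈ S, (-f p) = ∏ p ∈ S, ((-1 : ℂ) * f p) := by
        refine Finset.prod_congr rfl fun p _ => by ring
      rw [h', Finset.prod_mul_distrib, Finset.prod_const]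
    rw [hprodval, moebius_apply_of_squarefree hsq, hΩ,
      aux_f_prod f hf1 hfm S hSp, hcardo, hprodneg]
    push_cast
    ring
  rw [Finset.sum_congr rfl hstep2, aux_key]
  -- now compute RHS
  rw [Finset.mul_sum]
  refine Finset.sum_congr rfl fun p hp => ?_
  have hp1 : f p ≠ 1 := hfp p (Nat.prime_of_mem_primeFactors hp)
    (Nat.dvd_of_mem_primeFactors hp)
  have hne : f p - 1 ≠ 0 := sub_ne_zero.mpr hp1
  rw [← Finset.mul_prod_erase _ _ hp]
  have : ∀ q, (1 : ℂ) + -(f q) = 1 - f q := fun q => by ring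
  simp_rw [this]
  rw [mul_right_comm]
  congr 1
  field_simp
  ring
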